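/- Let γ, C1, C2, Δ, K, φ, θΔ, δ be real numbers satisfying: γ ≥ 0, C1 < 0, C2 > 0, K ≥ 0, cos(−Δ + φ) ≥ 1/√2, θΔ = C1·exp(−Δ) + C2·exp(Δ) + γ, θΔ − γ = (2/3)·K·cos(−Δ + φ), K·cos φ = (3/2)·(C1 + C2 + 4γ/3), and (1/√2)·|C1 + C2 + 4γ/3| − 4γ/3 ≥ δ > 0. Then Δ ≥ log(δ / C2). In particular, Δ → +∞ as C2 → 0⁺ with the other bounds held uniformly. -/
import Mathlib


/-- Under the boundary conditions of the simplest walking model's linearized step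
map, the step duration satisfies `Δ ≥ log (δ / C₂)`; in particular `Δ → +∞` as
`C₂ → 0⁺` with the other bounds held uniformly. -/
theorem step_duration_lower_bound
    (γ C1 C2 Δ K φ θΔ δ : ℝ)
    (hγ : γ ≥ 0) (hC1 : C1 < 0) (hC2 : C2 > 0) (hK : K ≥ 0)
    (hcos : Real.cos (-Δ + φ) ≥ 1 / Real.sqrt 2)
    (hθΔ : θΔ = C1 * Real.exp (-Δ) + C2 * Real.exp Δ + γ)
    (hKcosΔ : θΔ - γ = 2 / 3 * K * Real.cos (-Δ + φ))
    (hKcosφ : K * Real.cos φ = 3 / 2 * (C1 + C2 + 4 * γ / 3))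
    (hδ : 1 / Real.sqrt 2 * |C1 + C2 + 4 * γ / 3| - 4 * γ / 3 ≥ δ)
    (hδpos : δ > 0) :
    Δ ≥ Real.log (δ / C2) := by
  have hs2 : (0:ℝ) < Real.sqrt 2 := Real.sqrt_pos.mpr (by norm_num)
  set X := C1 + C2 + 4 * γ / 3 with hX
  -- (3/2)|X| ≤ K
  have habs : |K * Real.cos φ| = 3 / 2 * |X| := by
    rw [hKcosφ, abs_mul, abs_of_nonneg (by norm_num : (0:ℝ) ≤ (3:ℝ)/2)]
  have hKcos_le : |K * Real.cos φ| ≤ K := by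
    rw [abs_mul, abs_of_nonneg hK]
    nlinarith [Real.abs_cos_le_one φ, abs_nonneg (Real.cos φ)]
  have hXK : 3 / 2 * |X| ≤ K := by rw [← habs]; exact hKcos_le
  -- θΔ - γ ≥ δ
  have h1 : 2 / 3 * K * (1 / Real.sqrt 2) ≤ 2 / 3 * K * Real.cos (-Δ + φ) := by
    apply mul_le_mul_of_nonneg_left hcos
    positivity
  have h2 : 1 / Real.sqrt 2 * |X| ≤ 2 / 3 * K * (1 / Real.sqrt 2) := by
    have hinv : (0:ℝ) ≤ 1 / Real.sqrt 2 := by positivity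
    nlinarith [hXK]
  have h3 : θΔ - γ ≥ δ := by
    have : 1 / Real.sqrt 2 * |X| ≥ δ + 4 * γ / 3 := by linarith
    nlinarith [h1, h2]
  -- C2 * exp Δ ≥ δ
  have h4 : C2 * Real.exp Δ ≥ δ := by
    have hep : (0:ℝ) < Real.exp (-Δ) := Real.exp_pos _
    nlinarith [mul_pos (neg_pos.mpr hC1) hep]
  have h5 : δ / C2 ≤ Real.exp Δ := (div_le_iff₀ hC2).mpr (by linarith [h4])
  have := (Real.log_le_iff_le_exp (by positivity : (0:ℝ) < δ / C2)).mpr h5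
  linarith
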